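/- Let N ⊆ M be a Frobenius extension with Frobenius homomorphism ψ and quasibasis Σᵢ uᵢ ⊗ vᵢ. Define the Nakayama map ν : C_M(N) → C_M(N) on the centralizer by ν(c) = Σᵢ ψ(uᵢ c) vᵢ. Then ν is a ring automorphism of C_M(N), and for all m ∈ M and c ∈ C_M(N): ψ(m c) = ψ(ν(c) m), and Σᵢ uᵢ c ⊗ vᵢ = Σᵢ uᵢ ⊗ ν(c) vᵢ in M ⊗_N M. -/

import Mathlib

open scoped TensorProduct

namespace Frob

variable {N M : Type*} [Ring N] [Ring M]

/-- A Frobenius system for a ring extension `ι : N →+* M`: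
an `N`-`N`-bimodule map `ψ : M → N` together with a quasibasis `∑ i, u i ⊗ v i`. -/
structure FrobeniusData (ι : N →+* M) where
  ψ : M →+ N
  ψ_left : ∀ (n : N) (m : M), ψ (ι n * m) = n * ψ m
  ψ_right : ∀ (m : M) (n : N), ψ (m * ι n) = ψ m * n
  k : ℕ
  u : Fin k → M
  v : Fin k → M
  quasi_left : ∀ m : M, ∑ i, ι (ψ (m * u i)) * v i = m
  quasi_right : ∀ m : M, ∑ i, u i * ι (ψ (v i * m)) = m

/-- `N`-`N`-bimodule endomorphism of `M`. -/
def IsBimodEnd (ι : N →+* M) (α : M →+ M) : Prop :=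
  (∀ n m, α (ι n * m) = ι n * α m) ∧ (∀ m n, α (m * ι n) = α m * ι n)

variable {ι : N →+* M}

/-- The antipode `S_A(α)(m') = ∑ i, u i * ι (ψ (α (v i) * m'))`. -/
noncomputable def SA (D : FrobeniusData ι) (α : M →+ M) : M →+ M :=
  AddMonoidHom.mk' (fun m' => ∑ i, D.u i * ι (D.ψ (α (D.v i) * m')))
    (by intro x y; simp [mul_add, map_add, Finset.sum_add_distrib])

/-- The inverse antipode `S_A⁻¹(α)(m') = ∑ i, ι (ψ (m' * α (u i))) * v i`. -/
noncomputable def SAinv (D : FrobeniusData ι) (α : M →+ M) : M →+ M :=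
  AddMonoidHom.mk' (fun m' => ∑ i, ι (D.ψ (m' * α (D.u i))) * D.v i)
    (by intro x y; simp [add_mul, map_add, Finset.sum_add_distrib])

/-- The subgroup of `M ⊗[ℤ] M` by which one quotients to obtain `M ⊗_N M`. -/
def relN (ι : N →+* M) : Submodule ℤ (M ⊗[ℤ] M) :=
  Submodule.span ℤ
    {x | ∃ (n : N) (a b : M), x = (a * ι n) ⊗ₜ[ℤ] b - a ⊗ₜ[ℤ] (ι n * b)}

/-- The subgroup of `M ⊗[ℤ] M ⊗[ℤ] M` by which one quotients to obtain `M ⊗_N M ⊗_N M`. -/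
def relN3 (ι : N →+* M) : Submodule ℤ (M ⊗[ℤ] (M ⊗[ℤ] M)) :=
  Submodule.span ℤ
    ({x | ∃ (n : N) (a b c : M),
        x = (a * ι n) ⊗ₜ[ℤ] (b ⊗ₜ[ℤ] c) - a ⊗ₜ[ℤ] ((ι n * b) ⊗ₜ[ℤ] c)} ∪
     {x | ∃ (n : N) (a b c : M),
        x = a ⊗ₜ[ℤ] ((b * ι n) ⊗ₜ[ℤ] c) - a ⊗ₜ[ℤ] (b ⊗ₜ[ℤ] (ι n * c))})

/-- The Nakayama map `ν(c) = ∑ i, ψ(u i * c) * v i` on the centralizer. -/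
noncomputable def nakayama (D : FrobeniusData ι) (c : M) : M :=
  ∑ i, ι (D.ψ (D.u i * c)) * D.v i

/-- The centralizer `C_M(N)`. -/
def centralizer (ι : N →+* M) : Set M := {c : M | ∀ n : N, c * ι n = ι n * c}

/-- The Fourier transform `F(α) = ∑ i, u i ⊗ α (v i)` (a representative in `M ⊗[ℤ] M`). -/
noncomputable def Ftr (D : FrobeniusData ι) (α : M →+ M) : M ⊗[ℤ] M :=
  ∑ i, D.u i ⊗ₜ[ℤ] α (D.v i)

/-- The inverse Fourier transform evaluated on a representative:
`F⁻¹(b¹ ⊗ b²)(m) = ψ(m * b¹) * b²`. -/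
noncomputable def FinvEval (D : FrobeniusData ι) (x : M ⊗[ℤ] M) (m : M) : M :=
  LinearMap.mul' ℤ M
    ((LinearMap.rTensor M
      ((ι.toAddMonoidHom.comp (D.ψ.comp (AddMonoidHom.mulLeft m))).toIntLinearMap)) x)

end Frob

namespace Frob

section Aux
variable {N M : Type*} [Ring N] [Ring M] {ι : N →+* M} (D : FrobeniusData ι)

lemma injL {x y : M} (h : ∀ m, D.ψ (x * m) = D.ψ (y * m)) : x = y := by
  have hx := D.quasi_left x
  have hy := D.quasi_left y
  rw [← hx, ← hy]
  exact Finset.sum_congr rfl fun i _ => by rw [h (D.u i)]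

lemma injR {x y : M} (h : ∀ m, D.ψ (m * x) = D.ψ (m * y)) : x = y := by
  have hx := D.quasi_right x
  have hy := D.quasi_right y
  rw [← hx, ← hy]
  exact Finset.sum_congr rfl fun i _ => by rw [h (D.v i)]

/-- `ψ(m c) = ψ(ν(c) m)` for `c` in the centralizer. -/
lemma psiA {c : M} (hc : c ∈ centralizer ι) (m : M) :
    D.ψ (m * c) = D.ψ (nakayama D c * m) := by
  have h1 : D.ψ (m * c) = ∑ i, D.ψ (D.u i * c) * D.ψ (D.v i * m) := by
    conv_lhs => rw [← D.quasi_right m]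
    rw [Finset.sum_mul, map_sum]
    refine Finset.sum_congr rfl fun i _ => ?_
    rw [mul_assoc, ← hc, ← mul_assoc, D.ψ_right]
  have h2 : D.ψ (nakayama D c * m) = ∑ i, D.ψ (D.u i * c) * D.ψ (D.v i * m) := by
    rw [nakayama, Finset.sum_mul, map_sum]
    refine Finset.sum_congr rfl fun i _ => ?_
    rw [mul_assoc, D.ψ_left]
  rw [h1, h2]

/-- inverse Nakayama map -/
noncomputable def nakayamaInv (D : FrobeniusData ι) (c : M) : M :=
  ∑ i, D.u i * ι (D.ψ (c * D.v i))

/-- `ψ(c m) = ψ(m ν'(c))` for `c` in the centralizer. -/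
lemma psiA' {c : M} (hc : c ∈ centralizer ι) (m : M) :
    D.ψ (c * m) = D.ψ (m * nakayamaInv D c) := by
  have h1 : D.ψ (c * m) = ∑ i, D.ψ (m * D.u i) * D.ψ (c * D.v i) := by
    conv_lhs => rw [← D.quasi_left m]
    rw [Finset.mul_sum, map_sum]
    refine Finset.sum_congr rfl fun i _ => ?_
    rw [← mul_assoc, hc, mul_assoc, D.ψ_left]
  have h2 : D.ψ (m * nakayamaInv D c) = ∑ i, D.ψ (m * D.u i) * D.ψ (c * D.v i) := by
    rw [nakayamaInv, Finset.mul_sum, map_sum]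
    refine Finset.sum_congr rfl fun i _ => ?_
    rw [← mul_assoc, D.ψ_right]
  rw [h1, h2]

lemma nakayama_mem {c : M} (hc : c ∈ centralizer ι) :
    nakayama D c ∈ centralizer ι := by
  intro n
  refine injL D fun m => ?_
  calc D.ψ (nakayama D c * ι n * m)
      = D.ψ (nakayama D c * (ι n * m)) := by rw [mul_assoc]
    _ = D.ψ (ι n * m * c) := (psiA D hc _).symm
    _ = D.ψ (ι n * (m * c)) := by rw [mul_assoc]
    _ = n * D.ψ (m * c) := D.ψ_left n _
    _ = n * D.ψ (nakayama D c * m) := by rw [psiA D hc]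
    _ = D.ψ (ι n * (nakayama D c * m)) := (D.ψ_left n _).symm
    _ = D.ψ (ι n * nakayama D c * m) := by rw [mul_assoc]

lemma nakayamaInv_mem {c : M} (hc : c ∈ centralizer ι) :
    nakayamaInv D c ∈ centralizer ι := by
  intro n
  refine injR D fun m => ?_
  calc D.ψ (m * (nakayamaInv D c * ι n))
      = D.ψ (m * nakayamaInv D c * ι n) := by rw [mul_assoc]
    _ = D.ψ (m * nakayamaInv D c) * n := D.ψ_right _ n
    _ = D.ψ (c * m) * n := by rw [psiA' D hc]
    _ = D.ψ (c * m * ι n) := (D.ψ_right _ n).symm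
    _ = D.ψ (c * (m * ι n)) := by rw [mul_assoc]
    _ = D.ψ (m * ι n * nakayamaInv D c) := psiA' D hc _
    _ = D.ψ (m * (ι n * nakayamaInv D c)) := by rw [mul_assoc]

lemma nakayama_nakayamaInv {c : M} (hc : c ∈ centralizer ι) :
    nakayama D (nakayamaInv D c) = c := by
  refine injL D fun m => ?_
  rw [← psiA D (nakayamaInv_mem D hc), ← psiA' D hc]

lemma nakayamaInv_nakayama {c : M} (hc : c ∈ centralizer ι) :
    nakayamaInv D (nakayama D c) = c := by
  refine injR D fun m => ?_
  rw [← psiA' D (nakayama_mem D hc), ← psiA D hc]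

end Aux

end Frob

/-- The Nakayama map `ν(c) = ∑ i, ψ(u i * c) * v i` is a ring automorphism
of the centralizer `C_M(N)`, and satisfies `ψ(m c) = ψ(ν(c) m)` and
`∑ i, u i c ⊗ v i = ∑ i, u i ⊗ ν(c) v i` in `M ⊗_N M`. -/
theorem statement2 {N M : Type*} [Ring N] [Ring M] (ι : N →+* M)
    (D : Frob.FrobeniusData ι) :
    (∀ c ∈ Frob.centralizer ι, Frob.nakayama D c ∈ Frob.centralizer ι) ∧
    Frob.nakayama D 1 = 1 ∧
    (∀ c ∈ Frob.centralizer ι, ∀ c' ∈ Frob.centralizer ι,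
      Frob.nakayama D (c * c') = Frob.nakayama D c * Frob.nakayama D c') ∧
    (∃ ν' : M → M, ∀ c ∈ Frob.centralizer ι,
      ν' c ∈ Frob.centralizer ι ∧ Frob.nakayama D (ν' c) = c ∧ ν' (Frob.nakayama D c) = c) ∧
    (∀ (m : M), ∀ c ∈ Frob.centralizer ι, D.ψ (m * c) = D.ψ (Frob.nakayama D c * m)) ∧
    (∀ c ∈ Frob.centralizer ι,
      (∑ i, (D.u i * c) ⊗ₜ[ℤ] D.v i) - (∑ i, D.u i ⊗ₜ[ℤ] (Frob.nakayama D c * D.v i))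
        ∈ Frob.relN ι) := by
  refine ⟨fun c hc => Frob.nakayama_mem D hc, ?_, ?_, ?_, fun m c hc => Frob.psiA D hc m, ?_⟩
  · -- ν 1 = 1
    have := D.quasi_left 1
    simpa [Frob.nakayama] using this
  · -- multiplicativity
    intro c hc c' hc'
    have hcc' : c * c' ∈ Frob.centralizer ι := fun n => by
      rw [mul_assoc, hc' n, ← mul_assoc, hc n, mul_assoc]
    refine Frob.injL D fun m => ?_
    calc D.ψ (Frob.nakayama D (c * c') * m)
        = D.ψ (m * (c * c')) := (Frob.psiA D hcc' m).symm
      _ = D.ψ (m * c * c') := by rw [mul_assoc]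
      _ = D.ψ (Frob.nakayama D c' * (m * c)) := Frob.psiA D hc' _
      _ = D.ψ (Frob.nakayama D c' * m * c) := by rw [mul_assoc]
      _ = D.ψ (Frob.nakayama D c * (Frob.nakayama D c' * m)) := Frob.psiA D hc _
      _ = D.ψ (Frob.nakayama D c * Frob.nakayama D c' * m) := by rw [mul_assoc]
  · exact ⟨Frob.nakayamaInv D, fun c hc =>
      ⟨Frob.nakayamaInv_mem D hc, Frob.nakayama_nakayamaInv D hc,
        Frob.nakayamaInv_nakayama D hc⟩⟩
  · -- tensor relation
    intro c hc
    have key : (∑ i, (D.u i * c) ⊗ₜ[ℤ] D.v i)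
        - (∑ i, D.u i ⊗ₜ[ℤ] (Frob.nakayama D c * D.v i))
        = ∑ i, ∑ j, ((D.u j * ι (D.ψ (D.v j * (D.u i * c)))) ⊗ₜ[ℤ] D.v i
            - D.u j ⊗ₜ[ℤ] (ι (D.ψ (D.v j * (D.u i * c))) * D.v i)) := by
      have h1 : (∑ i, (D.u i * c) ⊗ₜ[ℤ] D.v i)
          = ∑ i, ∑ j, (D.u j * ι (D.ψ (D.v j * (D.u i * c)))) ⊗ₜ[ℤ] D.v i := by
        refine Finset.sum_congr rfl fun i _ => ?_
        conv_lhs => rw [← D.quasi_right (D.u i * c)]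
        rw [TensorProduct.sum_tmul]
      have h2 : (∑ i, D.u i ⊗ₜ[ℤ] (Frob.nakayama D c * D.v i))
          = ∑ i, ∑ j, D.u j ⊗ₜ[ℤ] (ι (D.ψ (D.v j * (D.u i * c))) * D.v i) := by
        rw [Finset.sum_comm]
        refine Finset.sum_congr rfl fun j _ => ?_
        rw [← TensorProduct.tmul_sum]
        congr 1
        have h3 : Frob.nakayama D c * D.v j
            = ∑ i, ι (D.ψ ((Frob.nakayama D c * D.v j) * D.u i)) * D.v i :=
          (D.quasi_left _).symm
        rw [h3]
        refine Finset.sum_congr rfl fun i _ => ?_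
        rw [mul_assoc, ← Frob.psiA D hc (D.v j * D.u i), mul_assoc]
      rw [h1, h2, ← Finset.sum_sub_distrib]
      exact Finset.sum_congr rfl fun i _ => by rw [Finset.sum_sub_distrib]
    rw [key]
    refine Submodule.sum_mem _ fun i _ => Submodule.sum_mem _ fun j _ =>
      Submodule.subset_span ⟨D.ψ (D.v j * (D.u i * c)), D.u j, D.v i, rfl⟩
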